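/- For any graph obtained from a single vertex labeled -2 by repeatedly either (i) attaching a new leaf vertex to an existing vertex v, with new label a(v)+1, or (ii) subdividing an existing edge {u,v} by a new vertex with label a(u)+a(v), any two adjacent vertices have coprime labels: gcd(a_i, a_j) = 1. -/

import Mathlib

/-- Labeled trees built by the blowup process: start from a single vertex
labeled `-2`; either attach a new leaf `w` to `v` with label `a(v)+1`, or
subdivide an edge `{u,v}` by a new vertex `w` with label `a(u)+a(v)`. -/
inductive Blowup : Finset ℕ → (ℕ → ℕ → Prop) → (ℕ → ℤ) → Prop
  | base (v : ℕ) : Blowup {v} (fun _ _ => False) (fun _ => -2)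
  | leaf {V : Finset ℕ} {adj : ℕ → ℕ → Prop} {lab : ℕ → ℤ} (v w : ℕ)
      (hv : v ∈ V) (hw : w ∉ V) (h : Blowup V adj lab) :
      Blowup (insert w V)
        (fun x y => adj x y ∨ (x = v ∧ y = w) ∨ (x = w ∧ y = v))
        (Function.update lab w (lab v + 1))
  | subdiv {V : Finset ℕ} {adj : ℕ → ℕ → Prop} {lab : ℕ → ℤ} (u v w : ℕ)
      (hu : u ∈ V) (hv : v ∈ V) (huv : adj u v) (hw : w ∉ V)
      (h : Blowup V adj lab) :
      Blowup (insert w V)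
        (fun x y => (adj x y ∧ ¬((x = u ∧ y = v) ∨ (x = v ∧ y = u))) ∨
          (x = u ∧ y = w) ∨ (x = w ∧ y = u) ∨ (x = v ∧ y = w) ∨ (x = w ∧ y = v))
        (Function.update lab w (lab u + lab v))


lemma blowup_adj_mem {V : Finset ℕ} {adj : ℕ → ℕ → Prop} {lab : ℕ → ℤ}
    (h : Blowup V adj lab) : ∀ x y, adj x y → x ∈ V ∧ y ∈ V := by
  induction h with
  | base v => intro x y hxy; exact hxy.elim
  | leaf v w hv hw h ih =>
    rintro x y (hxy | ⟨rfl, rfl⟩ | ⟨rfl, rfl⟩)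
    · exact ⟨Finset.mem_insert_of_mem (ih x y hxy).1,
        Finset.mem_insert_of_mem (ih x y hxy).2⟩
    · exact ⟨Finset.mem_insert_of_mem hv, Finset.mem_insert_self _ _⟩
    · exact ⟨Finset.mem_insert_self _ _, Finset.mem_insert_of_mem hv⟩
  | subdiv u v w hu hv huv hw h ih =>
    rintro x y (⟨hxy, -⟩ | ⟨rfl, rfl⟩ | ⟨rfl, rfl⟩ | ⟨rfl, rfl⟩ | ⟨rfl, rfl⟩)
    · exact ⟨Finset.mem_insert_of_mem (ih x y hxy).1,
        Finset.mem_insert_of_mem (ih x y hxy).2⟩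
    · exact ⟨Finset.mem_insert_of_mem hu, Finset.mem_insert_self _ _⟩
    · exact ⟨Finset.mem_insert_self _ _, Finset.mem_insert_of_mem hu⟩
    · exact ⟨Finset.mem_insert_of_mem hv, Finset.mem_insert_self _ _⟩
    · exact ⟨Finset.mem_insert_self _ _, Finset.mem_insert_of_mem hv⟩

theorem adjacent_labels_coprime {V : Finset ℕ} {adj : ℕ → ℕ → Prop} {lab : ℕ → ℤ}
    (h : Blowup V adj lab) :
    ∀ x y, x ∈ V → y ∈ V → adj x y → Int.gcd (lab x) (lab y) = 1 := by
  induction h with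
  | base v => intro x y _ _ hxy; exact hxy.elim
  | @leaf V adj lab v w hv hw h ih =>
    have hvne : v ≠ w := by rintro rfl; exact hw hv
    rintro x y hx hy (hxy | ⟨rfl, rfl⟩ | ⟨rfl, rfl⟩)
    · obtain ⟨hxV, hyV⟩ := blowup_adj_mem h x y hxy
      rw [Function.update_of_ne (by rintro rfl; exact hw hxV),
        Function.update_of_ne (by rintro rfl; exact hw hyV)]
      exact ih x y hxV hyV hxy
    · rw [Function.update_of_ne hvne, Function.update_self]
      exact Int.isCoprime_iff_gcd_eq_one.mp ⟨-1, 1, by ring⟩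
    · rw [Function.update_of_ne hvne, Function.update_self]
      exact Int.isCoprime_iff_gcd_eq_one.mp ⟨1, -1, by ring⟩
  | @subdiv V adj lab u v w hu hv huv hw h ih =>
    have hune : u ≠ w := by rintro rfl; exact hw hu
    have hvne : v ≠ w := by rintro rfl; exact hw hv
    have hcop : IsCoprime (lab u) (lab v) :=
      Int.isCoprime_iff_gcd_eq_one.mpr (ih u v hu hv huv)
    rintro x y hx hy (⟨hxy, -⟩ | ⟨rfl, rfl⟩ | ⟨rfl, rfl⟩ | ⟨rfl, rfl⟩ | ⟨rfl, rfl⟩)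
    · obtain ⟨hxV, hyV⟩ := blowup_adj_mem h x y hxy
      rw [Function.update_of_ne (by rintro rfl; exact hw hxV),
        Function.update_of_ne (by rintro rfl; exact hw hyV)]
      exact ih x y hxV hyV hxy
    · rw [Function.update_of_ne hune, Function.update_self]
      refine Int.isCoprime_iff_gcd_eq_one.mp ?_
      have := hcop.add_mul_right_right 1
      simpa [mul_one, add_comm] using this
    · rw [Function.update_of_ne hune, Function.update_self]
      refine Int.isCoprime_iff_gcd_eq_one.mp ?_
      have := (hcop.add_mul_right_right 1).symm
      simpa [mul_one, add_comm] using this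
    · rw [Function.update_of_ne hvne, Function.update_self]
      refine Int.isCoprime_iff_gcd_eq_one.mp ?_
      have := hcop.symm.add_mul_right_right 1
      simpa [mul_one, add_comm] using this
    · rw [Function.update_of_ne hvne, Function.update_self]
      refine Int.isCoprime_iff_gcd_eq_one.mp ?_
      have := (hcop.symm.add_mul_right_right 1).symm
      simpa [mul_one, add_comm] using this
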